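/- Let s be a positive integer, and let d_1 ≥ ⋯ ≥ d_s ≥ 0 and t_1 ≥ ⋯ ≥ t_s ≥ 0 be non-increasing sequences of nonnegative integers with d_i ≥ t_i for i = 1,…,s. Let A_1 ≥ ⋯ ≥ A_s ≥ 0 and B_1 ≥ ⋯ ≥ B_s ≥ 0 be non-increasing sequences of nonnegative integers such that (d_1 − t_1, …, d_s − t_s) ≺ (A_1 + B_1, …, A_s + B_s). Then there exists a non-increasing sequence f_1 ≥ ⋯ ≥ f_s of nonnegative integers such that d_i ≥ f_i ≥ t_i for i = 1,…,s, and (f_1 − t_1, …, f_s − t_s) ≺ (A_1, …, A_s), and (d_1 − f_1, …, d_s − f_s) ≺ (B_1, …, B_s). -/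

import Mathlib

/-- The sum of the `j` largest entries of a multiset of nonnegative integers
(realized as the maximum of the sums of submultisets with at most `j` elements). -/
def kMaxSum (M : Multiset ℕ) (j : ℕ) : ℕ :=
  ((M.powerset.filter (fun T => Multiset.card T ≤ j)).map Multiset.sum).sup

/-- Classical majorization of (the decreasing rearrangements of) two multisets of
nonnegative integers: equal total sums, and for every `j` the sum of the `j` largest
entries of `M` is at most the sum of the `j` largest entries of `N`. -/
def Majorized (M N : Multiset ℕ) : Prop :=
  M.sum = N.sum ∧ ∀ j, kMaxSum M j ≤ kMaxSum N j

/-- The multiset of entries of a finite tuple. -/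
def tupleMul {s : ℕ} (a : Fin s → ℕ) : Multiset ℕ := Multiset.map a Finset.univ.val

-- kMaxSum basic API
lemma sum_le_kMaxSum (M : Multiset ℕ) (j : ℕ) (T : Multiset ℕ) (hT : T ≤ M)
    (hc : Multiset.card T ≤ j) : T.sum ≤ kMaxSum M j := by
  apply Multiset.le_sup
  exact Multiset.mem_map.mpr ⟨T, Multiset.mem_filter.mpr ⟨Multiset.mem_powerset.mpr hT, hc⟩, rfl⟩

lemma kMaxSum_le {M : Multiset ℕ} {j : ℕ} {X : ℕ}
    (h : ∀ T ≤ M, Multiset.card T ≤ j → T.sum ≤ X) : kMaxSum M j ≤ X := by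
  apply Multiset.sup_le.mpr
  intro b hb
  obtain ⟨T, hT, rfl⟩ := Multiset.mem_map.mp hb
  obtain ⟨h1, h2⟩ := Multiset.mem_filter.mp hT
  exact h T (Multiset.mem_powerset.mp h1) h2

-- realize submultisets of map as maps
lemma exists_le_map {α β : Type*} [DecidableEq α] [DecidableEq β] (f : α → β) :
    ∀ (T : Multiset β) (u : Multiset α), T ≤ Multiset.map f u → ∃ u' ≤ u, u'.map f = T := by
  intro T
  induction T using Multiset.induction_on with
  | empty => exact fun u _ => ⟨0, zero_le, rfl⟩
  | cons x T ih =>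
    intro u h
    have hx : x ∈ Multiset.map f u := Multiset.mem_of_le h (Multiset.mem_cons_self x T)
    obtain ⟨a, ha, rfl⟩ := Multiset.mem_map.mp hx
    have hmapS : Multiset.map f (u.erase a) = (Multiset.map f u).erase (f a) := by
      have h1 : u = a ::ₘ u.erase a := (Multiset.cons_erase ha).symm
      conv_rhs => rw [h1]
      rw [Multiset.map_cons, Multiset.erase_cons_head]
    have hT : T ≤ Multiset.map f (u.erase a) := by
      rw [hmapS]
      have := Multiset.erase_le_erase (f a) h
      rwa [Multiset.erase_cons_head] at this
    obtain ⟨u', hu', hmap⟩ := ih (u.erase a) hT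
    refine ⟨a ::ₘ u', ?_, by rw [Multiset.map_cons, hmap]⟩
    calc a ::ₘ u' ≤ a ::ₘ u.erase a := Multiset.cons_le_cons a hu'
    _ = u := Multiset.cons_erase ha

lemma exists_finset_of_le_tupleMul {s : ℕ} (v : Fin s → ℕ) (T : Multiset ℕ)
    (h : T ≤ tupleMul v) :
    ∃ S : Finset (Fin s), Multiset.map v S.val = T ∧ S.card = Multiset.card T := by
  obtain ⟨u, hu, hmap⟩ := exists_le_map v T Finset.univ.val h
  have hnd : u.Nodup := Multiset.nodup_of_le hu Finset.univ.nodup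
  refine ⟨⟨u, hnd⟩, hmap, ?_⟩
  simp [Finset.card, ← hmap]

lemma finset_sum_le_kMaxSum {s : ℕ} (v : Fin s → ℕ) (S : Finset (Fin s)) {j : ℕ}
    (h : S.card ≤ j) : (∑ i ∈ S, v i) ≤ kMaxSum (tupleMul v) j := by
  apply sum_le_kMaxSum _ _ (Multiset.map v S.val)
  · exact Multiset.map_le_map (Finset.val_le_iff.mpr (Finset.subset_univ S))
  · simpa using h

lemma kMaxSum_tuple_le {s : ℕ} {v : Fin s → ℕ} {j : ℕ} {X : ℕ}
    (h : ∀ S : Finset (Fin s), S.card ≤ j → (∑ i ∈ S, v i) ≤ X) :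
    kMaxSum (tupleMul v) j ≤ X := by
  apply kMaxSum_le
  intro T hT hc
  obtain ⟨S, rfl, hcard⟩ := exists_finset_of_le_tupleMul v T hT
  have : (∑ i ∈ S, v i) = (Multiset.map v S.val).sum := rfl
  rw [← this]
  exact h S (by omega)

lemma tupleMul_sum {s : ℕ} (v : Fin s → ℕ) : (tupleMul v).sum = ∑ i, v i := rfl

def pref (s j : ℕ) : Finset (Fin s) := Finset.univ.filter (fun i => i.val < j)

lemma mem_pref {s j : ℕ} {i : Fin s} : i ∈ pref s j ↔ i.val < j := by
  simp [pref]

lemma pref_mono {s : ℕ} {j j' : ℕ} (h : j ≤ j') : pref s j ⊆ pref s j' := by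
  intro i hi
  rw [mem_pref] at *
  omega

lemma card_pref (s j : ℕ) : (pref s j).card = min j s := by
  have himg : (pref s j).image (Fin.val) = Finset.range (min j s) := by
    ext m
    simp only [Finset.mem_image, Finset.mem_range]
    constructor
    · rintro ⟨i, hi, rfl⟩
      rw [mem_pref] at hi
      have := i.isLt
      omega
    · intro hm
      exact ⟨⟨m, by omega⟩, mem_pref.mpr (by omega : m < j), rfl⟩
  have := Finset.card_image_of_injective (pref s j) (Fin.val_injective)
  rw [himg] at this
  simpa using this.symm

lemma pref_eq_min (s j : ℕ) : pref s j = pref s (min j s) := by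
  ext i
  rw [mem_pref, mem_pref]
  have := i.isLt
  omega

lemma antitone_sum_le_pref {s : ℕ} {v : Fin s → ℕ} (hv : Antitone v) (S : Finset (Fin s)) :
    (∑ i ∈ S, v i) ≤ ∑ i ∈ pref s S.card, v i := by
  generalize hn : S.card = n
  induction n generalizing S with
  | zero =>
    rw [Finset.card_eq_zero] at hn
    simp [hn]
  | succ n ih =>
    have hne : S.Nonempty := by
      rw [← Finset.card_pos, hn]; omega
    set im := S.max' hne with him
    have himem : im ∈ S := S.max'_mem hne
    have hsub : S ⊆ Finset.Iic im := by
      intro x hx; exact Finset.mem_Iic.mpr (S.le_max' x hx)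
    have hcard : S.card ≤ (im : ℕ) + 1 := by
      calc S.card ≤ (Finset.Iic im).card := Finset.card_le_card hsub
      _ = (im : ℕ) + 1 := by rw [Fin.card_Iic]
    have hns : n < s := by have := im.isLt; omega
    have hnle : (⟨n, hns⟩ : Fin s) ≤ im := by
      rw [Fin.le_def]; simp; omega
    have hS' : (S.erase im).card = n := by
      rw [Finset.card_erase_of_mem himem, hn]
      omega
    have hsplit : (∑ i ∈ S, v i) = v im + ∑ i ∈ S.erase im, v i :=
      (Finset.add_sum_erase S v himem).symm
    have hprefsplit : pref s (n + 1) = insert (⟨n, hns⟩ : Fin s) (pref s n) := by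
      ext i
      rw [Finset.mem_insert, mem_pref, mem_pref]
      constructor
      · intro h
        by_cases hc : i.val = n
        · exact Or.inl (Fin.ext hc)
        · exact Or.inr (by omega)
      · rintro (rfl | h)
        · simp
        · omega
    have hnotmem : (⟨n, hns⟩ : Fin s) ∉ pref s n := by
      rw [mem_pref]; simp
    rw [hsplit, hprefsplit, Finset.sum_insert hnotmem]
    exact Nat.add_le_add (hv hnle) (ih _ hS')

lemma kMaxSum_antitone {s : ℕ} {v : Fin s → ℕ} (hv : Antitone v) (j : ℕ) :
    kMaxSum (tupleMul v) j = ∑ i ∈ pref s j, v i := by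
  apply le_antisymm
  · apply kMaxSum_tuple_le
    intro S hS
    calc (∑ i ∈ S, v i) ≤ ∑ i ∈ pref s S.card, v i := antitone_sum_le_pref hv S
    _ ≤ ∑ i ∈ pref s j, v i := Finset.sum_le_sum_of_subset (pref_mono hS)
  · rw [pref_eq_min s j]
    apply finset_sum_le_kMaxSum
    rw [card_pref]
    omega

-- colSum section
def colSum (C : Multiset ℕ) (j : ℕ) : ℕ := (C.map (fun l => min l j)).sum

lemma colSum_add (C D : Multiset ℕ) (j : ℕ) :
    colSum (C + D) j = colSum C j + colSum D j := by
  simp [colSum]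

lemma colSum_zero (C : Multiset ℕ) : colSum C 0 = 0 := by
  simp [colSum]

lemma colSum_empty (j : ℕ) : colSum 0 j = 0 := by
  simp [colSum]

lemma colSum_mono_j (C : Multiset ℕ) {j j' : ℕ} (h : j ≤ j') : colSum C j ≤ colSum C j' := by
  induction C using Multiset.induction_on with
  | empty => simp [colSum]
  | cons x C ih =>
    simp only [colSum, Multiset.map_cons, Multiset.sum_cons] at *
    have : min x j ≤ min x j' := by omega
    omega

lemma colSum_succ (C : Multiset ℕ) (j : ℕ) :
    colSum C (j + 1) = colSum C j + Multiset.card (C.filter (fun x => j < x)) := by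
  induction C using Multiset.induction_on with
  | empty => simp [colSum]
  | cons x C ih =>
    simp only [colSum, Multiset.map_cons, Multiset.sum_cons, Multiset.filter_cons] at *
    by_cases hx : j < x
    · simp only [hx, if_pos]
      rw [Multiset.card_add, Multiset.card_singleton]
      have : min x (j+1) = min x j + 1 := by omega
      omega
    · simp only [hx, if_neg, not_false_iff]
      rw [zero_add]
      have : min x (j+1) = min x j := by omega
      omega

lemma colSum_one (C : Multiset ℕ) : colSum C 1 = Multiset.card (C.filter (fun x => 0 < x)) := by
  have := colSum_succ C 0
  rw [colSum_zero] at this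
  simpa using this

lemma colSum_map_pred_le (D : Multiset ℕ) (j : ℕ) :
    colSum (D.map (fun x => x - 1)) j ≤ colSum D j := by
  induction D using Multiset.induction_on with
  | empty => simp [colSum]
  | cons x D ih =>
    simp only [colSum, Multiset.map_cons, Multiset.map_map, Multiset.sum_cons,
      Function.comp] at *
    have : min (x - 1) j ≤ min x j := by omega
    omega

lemma colSum_decrement (D : Multiset ℕ) (j : ℕ) (hD : ∀ x ∈ D, 0 < x) :
    colSum (D.map (fun x => x - 1)) j + Multiset.card (D.filter (fun x => x ≤ j)) =
      colSum D j := by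
  induction D using Multiset.induction_on with
  | empty => simp [colSum]
  | cons x D ih =>
    have hx : 0 < x := hD x (Multiset.mem_cons_self x D)
    have ih' := ih (fun y hy => hD y (Multiset.mem_cons_of_mem hy))
    simp only [colSum, Multiset.map_cons, Multiset.map_map, Multiset.sum_cons,
      Multiset.filter_cons, Function.comp] at *
    by_cases hxj : x ≤ j
    · simp only [hxj, if_pos]
      rw [Multiset.card_add, Multiset.card_singleton]
      have : min (x - 1) j + 1 = min x j := by omega
      omega
    · simp only [hxj, if_neg, not_false_iff]
      rw [zero_add]
      have : min (x - 1) j = min x j := by omega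
      omega

lemma colSum_step_ineq (D : Multiset ℕ) (j : ℕ) (hD : ∀ x ∈ D, 0 < x) :
    colSum (D.map (fun x => x - 1)) j + Multiset.card D ≤ colSum D (j + 1) := by
  induction D using Multiset.induction_on with
  | empty => simp [colSum]
  | cons x D ih =>
    have hx : 0 < x := hD x (Multiset.mem_cons_self x D)
    have ih' := ih (fun y hy => hD y (Multiset.mem_cons_of_mem hy))
    simp only [colSum, Multiset.map_cons, Multiset.map_map, Multiset.sum_cons,
      Multiset.card_cons, Function.comp] at *
    have : min (x - 1) j + 1 ≤ min x (j + 1) := by omega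
    omega

lemma sum_map_pred (D : Multiset ℕ) (hD : ∀ x ∈ D, 0 < x) :
    (D.map (fun x => x - 1)).sum + Multiset.card D = D.sum := by
  induction D using Multiset.induction_on with
  | empty => simp
  | cons x D ih =>
    have hx : 0 < x := hD x (Multiset.mem_cons_self x D)
    have ih' := ih (fun y hy => hD y (Multiset.mem_cons_of_mem hy))
    simp only [Multiset.map_cons, Multiset.sum_cons, Multiset.card_cons] at *
    omega

lemma colSum_map_pred_ge (D : Multiset ℕ) (j : ℕ) :
    j * Multiset.card (D.filter (fun x => j < x)) ≤ colSum (D.map (fun x => x - 1)) j := by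
  induction D using Multiset.induction_on with
  | empty => simp [colSum]
  | cons x D ih =>
    simp only [colSum, Multiset.map_cons, Multiset.map_map, Multiset.sum_cons,
      Multiset.filter_cons, Function.comp] at *
    by_cases hx : j < x
    · simp only [hx, if_pos]
      rw [Multiset.card_add, Multiset.card_singleton]
      have : min (x - 1) j = j := by omega
      rw [Nat.mul_add, Nat.mul_one]
      omega
    · simp only [hx, if_neg, not_false_iff]
      rw [zero_add]
      omega

lemma colSum_ge_card_filter (C : Multiset ℕ) (j : ℕ) :
    j * Multiset.card (C.filter (fun x => j < x)) ≤ colSum C j := by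
  induction C using Multiset.induction_on with
  | empty => simp [colSum]
  | cons x C ih =>
    simp only [colSum, Multiset.map_cons, Multiset.sum_cons, Multiset.filter_cons] at *
    by_cases hx : j < x
    · simp only [hx, if_pos]
      rw [Multiset.card_add, Multiset.card_singleton]
      have : min x j = j := by omega
      rw [Nat.mul_add, Nat.mul_one]
      omega
    · simp only [hx, if_neg, not_false_iff]
      rw [zero_add]
      omega

-- choosing the top k elements of a multiset
lemma ms_exists_max (C : Multiset ℕ) (h : C ≠ 0) : ∃ x ∈ C, ∀ y ∈ C, y ≤ x := by
  induction C using Multiset.induction_on with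
  | empty => exact absurd rfl h
  | cons x C ih =>
    by_cases hC : C = 0
    · subst hC
      exact ⟨x, Multiset.mem_cons_self x 0, by intro y hy; simp at hy; omega⟩
    · obtain ⟨m, hm, hmax⟩ := ih hC
      refine ⟨max x m, ?_, ?_⟩
      · by_cases hxm : x ≤ m
        · rw [max_eq_right hxm]; exact Multiset.mem_cons_of_mem hm
        · rw [max_eq_left (by omega)]; exact Multiset.mem_cons_self x C
      · intro y hy
        rcases Multiset.mem_cons.mp hy with rfl | hy
        · exact le_max_left _ _
        · exact le_trans (hmax y hy) (le_max_right _ _)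

lemma choose_top :
    ∀ (k : ℕ) (C : Multiset ℕ), k ≤ Multiset.card (C.filter (fun x => 0 < x)) →
    ∃ D R, C = D + R ∧ Multiset.card D = k ∧ (∀ x ∈ D, 0 < x) ∧
      (∀ x ∈ D, ∀ y ∈ R, y ≤ x) := by
  intro k
  induction k with
  | zero => exact fun C _ => ⟨0, C, by simp⟩
  | succ k ih =>
    intro C hC
    have hCne : C ≠ 0 := by
      intro h
      rw [h] at hC
      simp at hC
    obtain ⟨x, hx, hmax⟩ := ms_exists_max C hCne
    have hxpos : 0 < x := by
      have h1 : 0 < Multiset.card (C.filter (fun x => 0 < x)) := by omega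
      rw [Multiset.card_pos_iff_exists_mem] at h1
      obtain ⟨y, hy⟩ := h1
      rw [Multiset.mem_filter] at hy
      exact lt_of_lt_of_le hy.2 (hmax y hy.1)
    have hcons : C = x ::ₘ C.erase x := (Multiset.cons_erase hx).symm
    have hfilter : Multiset.card ((C.erase x).filter (fun x => 0 < x)) + 1 =
        Multiset.card (C.filter (fun x => 0 < x)) := by
      conv_rhs => rw [hcons]
      rw [Multiset.filter_cons_of_pos _ hxpos]
      simp
    obtain ⟨D', R', heq, hcard, hpos, hth⟩ := ih (C.erase x) (by omega)
    refine ⟨x ::ₘ D', R', ?_, by simp [hcard], ?_, ?_⟩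
    · rw [hcons, heq, Multiset.cons_add]
    · intro y hy
      rcases Multiset.mem_cons.mp hy with rfl | hy
      · exact hxpos
      · exact hpos y hy
    · intro z hz y hy
      rcases Multiset.mem_cons.mp hz with rfl | hz
      · apply hmax
        rw [hcons]
        apply Multiset.mem_cons_of_mem
        rw [heq]
        exact Multiset.mem_add.mpr (Or.inr hy)
      · exact hth z hz y hy

-- splitting a decomposition across a sum
lemma split_add {X Y D R : Multiset ℕ} (h : X + Y = D + R) :
    ∃ DX DY RX RY : Multiset ℕ,
      DX + DY = D ∧ RX + RY = R ∧ DX + RX = X ∧ DY + RY = Y := by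
  have hD : D ≤ X + Y := by rw [h]; exact Multiset.le_add_right D R
  set DX := D ∩ X with hDX
  have hDXle : DX ≤ X := inf_le_right
  have hDXleD : DX ≤ D := inf_le_left
  set DY := D - DX with hDY
  have hDYle : DY ≤ Y := by
    rw [hDY, hDX, Multiset.sub_inter]
    rw [Multiset.sub_le_iff_le_add]
    rwa [add_comm]
  have hDsum : DX + DY = D := by
    rw [hDY]
    exact add_tsub_cancel_of_le hDXleD
  set RX := X - DX with hRX
  set RY := Y - DY with hRY
  have hXsum : DX + RX = X := add_tsub_cancel_of_le hDXle
  have hYsum : DY + RY = Y := add_tsub_cancel_of_le hDYle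
  refine ⟨DX, DY, RX, RY, hDsum, ?_, hXsum, hYsum⟩
  have : (DX + RX) + (DY + RY) = (DX + DY) + (RX + RY) := by
    simp only [add_assoc, add_left_comm, add_comm]
  have h2 : (DX + DY) + R = (DX + DY) + (RX + RY) := by
    rw [hDsum, ← h, ← hXsum, ← hYsum] at *
    rw [hDsum] at this ⊢
    rw [← this, hXsum, hYsum]
  exact (add_left_cancel h2).symm

lemma pref_zero (s : ℕ) : pref s 0 = ∅ := by
  ext i; simp [mem_pref]

lemma pref_sum_succ {n : ℕ} (c : Fin (n + 1) → ℕ) (j : ℕ) :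
    ∑ i ∈ pref (n + 1) (j + 1), c i = c 0 + ∑ i ∈ pref n j, c i.succ := by
  rw [pref, pref, Finset.sum_filter, Finset.sum_filter, Fin.sum_univ_succ]
  congr 1
  · simp

lemma subset_sum_succ {n : ℕ} (f : Fin (n + 1) → ℕ) (S : Finset (Fin (n + 1))) :
    ∑ i ∈ S, f i = (if (0 : Fin (n + 1)) ∈ S then f 0 else 0) +
      ∑ i ∈ Finset.univ.filter (fun i : Fin n => i.succ ∈ S), f i.succ := by
  have h1 : Finset.univ.filter (· ∈ S) = S := Finset.filter_univ_mem S
  rw [← h1, Finset.sum_filter, Fin.sum_univ_succ, h1]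
  congr 1
  rw [Finset.sum_filter]

lemma subset_card_succ {n : ℕ} (S : Finset (Fin (n + 1))) :
    S.card = (if (0 : Fin (n + 1)) ∈ S then 1 else 0) +
      (Finset.univ.filter (fun i : Fin n => i.succ ∈ S)).card := by
  rw [Finset.card_eq_sum_ones, subset_sum_succ (fun _ => 1) S, Finset.card_eq_sum_ones]
-- GALE-RYSER style core lemma
lemma GR : ∀ (n : ℕ) (c : Fin n → ℕ), Antitone c → ∀ CA CB : Multiset ℕ,
    (∀ j, j ≤ n → (∑ i ∈ pref n j, c i) ≤ colSum (CA + CB) j) →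
    ((∑ i, c i) = (CA + CB).sum) →
    ∃ a b : Fin n → ℕ, (∀ i, a i + b i = c i) ∧
      ((∑ i, a i) = CA.sum) ∧ ((∑ i, b i) = CB.sum) ∧
      (∀ S : Finset (Fin n), (∑ i ∈ S, a i) ≤ colSum CA S.card) ∧
      (∀ S : Finset (Fin n), (∑ i ∈ S, b i) ≤ colSum CB S.card) := by
  intro n
  induction n with
  | zero =>
    intro c hc CA CB hdom htot
    have h0 : (0 : ℕ) = CA.sum + CB.sum := by
      rw [← Multiset.sum_add]
      simpa using htot
    refine ⟨fun _ => 0, fun _ => 0, fun i => i.elim0, ?_, ?_, ?_, ?_⟩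
    · simp; omega
    · simp; omega
    · intro S
      rw [Finset.sum_eq_zero (fun i _ => rfl)]
      exact Nat.zero_le _
    · intro S
      rw [Finset.sum_eq_zero (fun i _ => rfl)]
      exact Nat.zero_le _
  | succ n ih =>
    intro c hc CA CB hdom htot
    set m := CA + CB with hm
    set k := c 0 with hk
    -- k ≤ number of positive columns
    have hpref1 : (∑ i ∈ pref (n + 1) 1, c i) = k := by
      have h := pref_sum_succ c 0
      rw [pref_zero, ← hk] at h
      simpa using h
    have hk_le : k ≤ Multiset.card (m.filter (fun x => 0 < x)) := by
      have := hdom 1 (by omega)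
      rw [hpref1, colSum_one] at this
      exact this
    obtain ⟨D, R, hmDR, hcardD, hDpos, hth⟩ := choose_top k m hk_le
    obtain ⟨DA, RA, DB, RB, hCAsum, hCBsum, hDsum, hRsum⟩ := split_add hmDR.symm
    set CA' := DA.map (fun x => x - 1) + RA with hCA'
    set CB' := DB.map (fun x => x - 1) + RB with hCB'
    have hDApos : ∀ x ∈ DA, 0 < x := by
      intro x hx
      exact hDpos x (by rw [← hDsum]; exact Multiset.mem_add.mpr (Or.inl hx))
    have hDBpos : ∀ x ∈ DB, 0 < x := by
      intro x hx
      exact hDpos x (by rw [← hDsum]; exact Multiset.mem_add.mpr (Or.inr hx))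
    have hm' : CA' + CB' = D.map (fun x => x - 1) + R := by
      rw [hCA', hCB', add_add_add_comm, ← Multiset.map_add, hDsum, hRsum]
    set tc := fun i : Fin n => c i.succ with htc
    have htc_anti : Antitone tc := by
      intro i j hij
      apply hc
      rw [Fin.le_def]
      simp only [Fin.val_succ]
      exact Nat.succ_le_succ hij
    -- the inductive dominance hypothesis
    have hdom' : ∀ j, j ≤ n → (∑ i ∈ pref n j, tc i) ≤ colSum (CA' + CB') j := by
      intro j hj
      rcases Nat.eq_zero_or_pos j with rfl | hjpos
      · rw [pref_zero]
        simp
      have hkey : (∑ i ∈ pref (n + 1) (j + 1), c i) = k + ∑ i ∈ pref n j, tc i := by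
        rw [pref_sum_succ]
      have hdomj : k + (∑ i ∈ pref n j, tc i) ≤ colSum m j +
          Multiset.card (m.filter (fun x => j < x)) := by
        rw [← hkey, ← colSum_succ]
        exact hdom (j + 1) (by omega)
      set lam := Multiset.card (m.filter (fun x => j < x)) with hlam
      have hlamsplit : lam = Multiset.card (D.filter (fun x => j < x)) +
          Multiset.card (R.filter (fun x => j < x)) := by
        rw [hlam, hmDR, Multiset.filter_add, Multiset.card_add]
      by_cases hcase : lam ≤ k
      · -- case 1 : all tall columns are among the chosen ones
        have hRf : Multiset.card (R.filter (fun x => j < x)) = 0 := by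
          by_contra hne
          have hpos : 0 < Multiset.card (R.filter (fun x => j < x)) := Nat.pos_of_ne_zero hne
          rw [Multiset.card_pos_iff_exists_mem] at hpos
          obtain ⟨y, hy⟩ := hpos
          rw [Multiset.mem_filter] at hy
          have hDall : D.filter (fun x => j < x) = D := by
            rw [Multiset.filter_eq_self]
            intro x hx
            exact lt_of_lt_of_le hy.2 (hth x hx y hy.1)
          rw [hDall, hcardD] at hlamsplit
          omega
        have hDf : Multiset.card (D.filter (fun x => j < x)) = lam := by omega
        have hcnt : Multiset.card (D.filter (fun x => x ≤ j)) +
            Multiset.card (D.filter (fun x => j < x)) = k := by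
          have hsplit := Multiset.filter_add_not (fun x => x ≤ j) D
          have hcongr : D.filter (fun x => ¬ x ≤ j) = D.filter (fun x => j < x) := by
            apply Multiset.filter_congr
            intro x _
            constructor <;> (intro; omega)
          rw [hcongr] at hsplit
          have := congrArg Multiset.card hsplit
          rw [Multiset.card_add] at this
          omega
        have hdec : colSum (CA' + CB') j + Multiset.card (D.filter (fun x => x ≤ j)) =
            colSum m j := by
          rw [hm', hmDR, colSum_add, colSum_add]
          have := colSum_decrement D j hDpos
          omega
        omega
      · -- case 2 : many tall columns
        push_neg at hcase
        have hn1 : 1 ≤ n := by omega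
        have hc1 : c ⟨1, by omega⟩ ≤ k := by
          rw [hk]
          apply hc
          rw [Fin.le_def]
          simp
        have hbound : (∑ i ∈ pref n j, tc i) ≤ j * c ⟨1, by omega⟩ := by
          calc (∑ i ∈ pref n j, tc i) ≤ (pref n j).card * c ⟨1, by omega⟩ := by
                apply Finset.sum_le_card_nsmul
                intro i _
                apply hc
                rw [Fin.le_def]
                simp [Fin.val_succ]
          _ ≤ j * c ⟨1, by omega⟩ := by
                apply Nat.mul_le_mul_right
                rw [card_pref]
                omega
        have hms : j * lam ≤ colSum (CA' + CB') j := by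
          rw [hm', colSum_add, hlamsplit, Nat.mul_add]
          exact Nat.add_le_add (colSum_map_pred_ge D j) (colSum_ge_card_filter R j)
        have hmul : j * (c ⟨1, by omega⟩ + 1) ≤ j * lam := by
          apply Nat.mul_le_mul_left
          omega
        have hmul2 : j * (c ⟨1, by omega⟩ + 1) = j * c ⟨1, by omega⟩ + j := by ring
        omega
    -- the inductive total hypothesis
    have htot' : (∑ i, tc i) = (CA' + CB').sum := by
      have h1 : (∑ i, c i) = k + ∑ i, tc i := Fin.sum_univ_succ c
      have h2 : (D.map (fun x => x - 1)).sum + Multiset.card D = D.sum := sum_map_pred D hDpos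
      have h3 : m.sum = D.sum + R.sum := by rw [hmDR, Multiset.sum_add]
      have h4 : (CA' + CB').sum = (D.map (fun x => x - 1)).sum + R.sum := by
        rw [hm', Multiset.sum_add]
      omega
    obtain ⟨a', b', hab', hsa', hsb', hSa', hSb'⟩ := ih tc htc_anti CA' CB' hdom' htot'
    set a : Fin (n + 1) → ℕ := Fin.cons (Multiset.card DA) a' with ha
    set b : Fin (n + 1) → ℕ := Fin.cons (Multiset.card DB) b' with hb
    have hcards : Multiset.card DA + Multiset.card DB = k := by
      rw [← hcardD, ← hDsum, Multiset.card_add]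
    have hCA'sum : CA'.sum + Multiset.card DA = CA.sum := by
      rw [hCA', Multiset.sum_add, ← hCAsum, Multiset.sum_add]
      have := sum_map_pred DA hDApos
      omega
    have hCB'sum : CB'.sum + Multiset.card DB = CB.sum := by
      rw [hCB', Multiset.sum_add, ← hCBsum, Multiset.sum_add]
      have := sum_map_pred DB hDBpos
      omega
    have hcolA1 : ∀ jj : ℕ, colSum CA' jj + Multiset.card DA ≤ colSum CA (jj + 1) := by
      intro jj
      rw [hCA', colSum_add, ← hCAsum, colSum_add]
      have h1 := colSum_step_ineq DA jj hDApos
      have h2 := colSum_mono_j RA (by omega : jj ≤ jj + 1)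
      omega
    have hcolB1 : ∀ jj : ℕ, colSum CB' jj + Multiset.card DB ≤ colSum CB (jj + 1) := by
      intro jj
      rw [hCB', colSum_add, ← hCBsum, colSum_add]
      have h1 := colSum_step_ineq DB jj hDBpos
      have h2 := colSum_mono_j RB (by omega : jj ≤ jj + 1)
      omega
    have hcolA2 : ∀ jj : ℕ, colSum CA' jj ≤ colSum CA jj := by
      intro jj
      rw [hCA', colSum_add, ← hCAsum, colSum_add]
      have := colSum_map_pred_le DA jj
      omega
    have hcolB2 : ∀ jj : ℕ, colSum CB' jj ≤ colSum CB jj := by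
      intro jj
      rw [hCB', colSum_add, ← hCBsum, colSum_add]
      have := colSum_map_pred_le DB jj
      omega
    refine ⟨a, b, ?_, ?_, ?_, ?_, ?_⟩
    · intro i
      induction i using Fin.cases with
      | zero => rw [ha, hb]; simp [Fin.cons_zero]; omega
      | succ i => rw [ha, hb]; simp only [Fin.cons_succ]; exact hab' i
    · rw [ha, Fin.sum_univ_succ]
      simp only [Fin.cons_zero, Fin.cons_succ]
      omega
    · rw [hb, Fin.sum_univ_succ]
      simp only [Fin.cons_zero, Fin.cons_succ]
      omega
    · intro S
      have hdecomp := subset_sum_succ a S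
      have hcardS := subset_card_succ S
      set S' := Finset.univ.filter (fun i : Fin n => i.succ ∈ S) with hS'
      by_cases h0 : (0 : Fin (n + 1)) ∈ S
      · rw [hdecomp, if_pos h0]
        have h1 : (∑ i ∈ S', a i.succ) ≤ colSum CA' S'.card := by
          have : ∀ i ∈ S', a i.succ = a' i := by intro i _; rw [ha]; simp [Fin.cons_succ]
          rw [Finset.sum_congr rfl this]
          exact hSa' S'
        have h2 := hcolA1 S'.card
        have h3 : S.card = S'.card + 1 := by rw [hcardS, if_pos h0]; omega
        rw [h3]
        have h4 : a 0 = Multiset.card DA := by rw [ha]; simp [Fin.cons_zero]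
        omega
      · rw [hdecomp, if_neg h0]
        have h1 : (∑ i ∈ S', a i.succ) ≤ colSum CA' S'.card := by
          have : ∀ i ∈ S', a i.succ = a' i := by intro i _; rw [ha]; simp [Fin.cons_succ]
          rw [Finset.sum_congr rfl this]
          exact hSa' S'
        have h3 : S.card = S'.card := by rw [hcardS, if_neg h0]; omega
        rw [h3]
        have := hcolA2 S'.card
        omega
    · intro S
      have hdecomp := subset_sum_succ b S
      have hcardS := subset_card_succ S
      set S' := Finset.univ.filter (fun i : Fin n => i.succ ∈ S) with hS'
      by_cases h0 : (0 : Fin (n + 1)) ∈ S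
      · rw [hdecomp, if_pos h0]
        have h1 : (∑ i ∈ S', b i.succ) ≤ colSum CB' S'.card := by
          have : ∀ i ∈ S', b i.succ = b' i := by intro i _; rw [hb]; simp [Fin.cons_succ]
          rw [Finset.sum_congr rfl this]
          exact hSb' S'
        have h2 := hcolB1 S'.card
        have h3 : S.card = S'.card + 1 := by rw [hcardS, if_pos h0]; omega
        rw [h3]
        have h4 : b 0 = Multiset.card DB := by rw [hb]; simp [Fin.cons_zero]
        omega
      · rw [hdecomp, if_neg h0]
        have h1 : (∑ i ∈ S', b i.succ) ≤ colSum CB' S'.card := by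
          have : ∀ i ∈ S', b i.succ = b' i := by intro i _; rw [hb]; simp [Fin.cons_succ]
          rw [Finset.sum_congr rfl this]
          exact hSb' S'
        have h3 : S.card = S'.card := by rw [hcardS, if_neg h0]; omega
        rw [h3]
        have := hcolB2 S'.card
        omega
-- two-point modification lemma
lemma exists_same_card_sum_le {s : ℕ} (φ ψ : Fin s → ℕ) (x y : Fin s) (hxy : x ≠ y)
    (hoff : ∀ z, z ≠ x → z ≠ y → φ z = ψ z)
    (hboth : φ x + φ y ≤ ψ x + ψ y)
    (hx : φ x ≤ ψ y) (hy : φ y ≤ ψ y) :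
    ∀ S : Finset (Fin s), ∃ S' : Finset (Fin s), S'.card = S.card ∧
      (∑ i ∈ S, φ i) ≤ ∑ i ∈ S', ψ i := by
  intro S
  by_cases hxS : x ∈ S <;> by_cases hyS : y ∈ S
  · -- both in S
    refine ⟨S, rfl, ?_⟩
    have hymem : y ∈ S.erase x := Finset.mem_erase.mpr ⟨Ne.symm hxy, hyS⟩
    have e1 : (∑ i ∈ S, φ i) = φ x + (φ y + ∑ i ∈ (S.erase x).erase y, φ i) := by
      rw [Finset.add_sum_erase _ _ hymem, Finset.add_sum_erase _ _ hxS]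
    have e2 : (∑ i ∈ S, ψ i) = ψ x + (ψ y + ∑ i ∈ (S.erase x).erase y, ψ i) := by
      rw [Finset.add_sum_erase _ _ hymem, Finset.add_sum_erase _ _ hxS]
    have e3 : (∑ i ∈ (S.erase x).erase y, φ i) = ∑ i ∈ (S.erase x).erase y, ψ i := by
      apply Finset.sum_congr rfl
      intro z hz
      have h1 := Finset.mem_erase.mp hz
      have h2 := Finset.mem_erase.mp h1.2
      exact hoff z h2.1 h1.1
    omega
  · -- x in S, y not
    refine ⟨insert y (S.erase x), ?_, ?_⟩
    · rw [Finset.card_insert_of_notMem (fun h => hyS (Finset.mem_of_mem_erase h)),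
        Finset.card_erase_of_mem hxS]
      have : 0 < S.card := Finset.card_pos.mpr ⟨x, hxS⟩
      omega
    · have e1 : (∑ i ∈ S, φ i) = φ x + ∑ i ∈ S.erase x, φ i := by
        rw [Finset.add_sum_erase _ _ hxS]
      have e2 : (∑ i ∈ insert y (S.erase x), ψ i) = ψ y + ∑ i ∈ S.erase x, ψ i := by
        rw [Finset.sum_insert (fun h => hyS (Finset.mem_of_mem_erase h))]
      have e3 : (∑ i ∈ S.erase x, φ i) = ∑ i ∈ S.erase x, ψ i := by
        apply Finset.sum_congr rfl
        intro z hz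
        exact hoff z (Finset.mem_erase.mp hz).1 (fun h => hyS (h ▸ Finset.mem_of_mem_erase hz))
      omega
  · -- y in S, x not
    refine ⟨S, rfl, ?_⟩
    have e1 : (∑ i ∈ S, φ i) = φ y + ∑ i ∈ S.erase y, φ i := by
      rw [Finset.add_sum_erase _ _ hyS]
    have e2 : (∑ i ∈ S, ψ i) = ψ y + ∑ i ∈ S.erase y, ψ i := by
      rw [Finset.add_sum_erase _ _ hyS]
    have e3 : (∑ i ∈ S.erase y, φ i) = ∑ i ∈ S.erase y, ψ i := by
      apply Finset.sum_congr rfl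
      intro z hz
      exact hoff z (fun h => hxS (h ▸ Finset.mem_of_mem_erase hz)) (Finset.mem_erase.mp hz).1
    omega
  · refine ⟨S, rfl, le_of_eq ?_⟩
    apply Finset.sum_congr rfl
    intro z hz
    exact hoff z (fun h => hxS (h ▸ hz)) (fun h => hyS (h ▸ hz))

-- adjacent violation of antitonicity
lemma exists_adjacent_of_not_antitone {s : ℕ} {f : Fin s → ℕ} (h : ¬ Antitone f) :
    ∃ (i : ℕ) (h1 : i + 1 < s), f ⟨i, Nat.lt_of_succ_lt h1⟩ < f ⟨i + 1, h1⟩ := by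
  by_contra hno
  push_neg at hno
  apply h
  have step : ∀ (p : ℕ) (i j : Fin s), (j : ℕ) = (i : ℕ) + p → f j ≤ f i := by
    intro p
    induction p with
    | zero =>
      intro i j hij
      have : i = j := Fin.ext (by omega)
      rw [this]
    | succ p ihp =>
      intro i j hij
      have hlt : (i : ℕ) + p + 1 < s := by have := j.isLt; omega
      have h2 := hno ((i : ℕ) + p) hlt
      have hj : j = ⟨(i : ℕ) + p + 1, hlt⟩ := Fin.ext (show (j : ℕ) = (i : ℕ) + p + 1 by omega)
      calc f j = f ⟨(i : ℕ) + p + 1, hlt⟩ := by rw [hj]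
      _ ≤ f ⟨(i : ℕ) + p, Nat.lt_of_succ_lt hlt⟩ := h2
      _ ≤ f i := ihp i _ rfl
  intro i j hij
  exact step ((j : ℕ) - (i : ℕ)) i j (by have := Fin.le_def.mp hij; omega)

-- down-closed subsets of Fin s are prefixes
lemma downclosed_eq_pref {s : ℕ} (P : Finset (Fin s))
    (hdc : ∀ i i' : Fin s, i' ≤ i → i ∈ P → i' ∈ P) : P = pref s P.card := by
  ext i
  rw [mem_pref]
  constructor
  · intro hi
    have hsub : Finset.Iic i ⊆ P := by
      intro x hx
      exact hdc i x (Finset.mem_Iic.mp hx) hi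
    have := Finset.card_le_card hsub
    rw [Fin.card_Iic] at this
    omega
  · intro hi
    by_contra hni
    have hsub : P ⊆ Finset.Iio i := by
      intro x hx
      rw [Finset.mem_Iio]
      by_contra hge
      exact hni (hdc x i (le_of_not_gt hge) hx)
    have := Finset.card_le_card hsub
    rw [Fin.card_Iio] at this
    omega

lemma pref_inter (s a b : ℕ) : pref s a ∩ pref s b = pref s (min a b) := by
  ext i
  simp only [Finset.mem_inter, mem_pref]
  omega

-- the columns of an antitone tuple
def colsOf {s : ℕ} (A : Fin s → ℕ) (hs : 0 < s) : Multiset ℕ :=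
  (Finset.range (A ⟨0, hs⟩)).val.map (fun l => (Finset.univ.filter (fun i : Fin s => l < A i)).card)

lemma colSum_colsOf {s : ℕ} {A : Fin s → ℕ} (hs : 0 < s) (hA : Antitone A) (j : ℕ) :
    colSum (colsOf A hs) j = ∑ i ∈ pref s j, A i := by
  have hPl : ∀ l : ℕ, (Finset.univ.filter (fun i : Fin s => l < A i)) =
      pref s (Finset.univ.filter (fun i : Fin s => l < A i)).card := by
    intro l
    apply downclosed_eq_pref
    intro i i' hle hi
    simp only [Finset.mem_filter, Finset.mem_univ, true_and] at *
    exact lt_of_lt_of_le hi (hA hle)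
  have hmin : ∀ l : ℕ, min ((Finset.univ.filter (fun i : Fin s => l < A i)).card) j =
      ((Finset.univ.filter (fun i : Fin s => l < A i)) ∩ pref s j).card := by
    intro l
    set p := (Finset.univ.filter (fun i : Fin s => l < A i)).card with hp
    have hps : p ≤ s := by
      rw [hp]
      calc (Finset.univ.filter (fun i : Fin s => l < A i)).card ≤ Finset.univ.card :=
        Finset.card_le_card (Finset.filter_subset _ _)
      _ = s := by simp
    have h1 : (Finset.univ.filter (fun i : Fin s => l < A i)) ∩ pref s j =
        pref s (min p j) := by
      conv_lhs => rw [hPl l]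
      rw [← hp, pref_inter]
    rw [h1, card_pref]
    omega
  have hstep : colSum (colsOf A hs) j =
      ∑ l ∈ Finset.range (A ⟨0, hs⟩),
        ((Finset.univ.filter (fun i : Fin s => l < A i)) ∩ pref s j).card := by
    rw [colSum, colsOf, Multiset.map_map]
    rw [Finset.sum_congr rfl (fun l _ => (hmin l).symm)]
    rfl
  rw [hstep]
  have hswap : ∀ l : ℕ, ((Finset.univ.filter (fun i : Fin s => l < A i)) ∩ pref s j).card =
      ∑ i ∈ pref s j, if l < A i then 1 else 0 := by
    intro l
    rw [← Finset.card_filter]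
    congr 1
    ext i
    simp only [Finset.mem_inter, Finset.mem_filter, Finset.mem_univ, true_and]
    tauto
  rw [Finset.sum_congr rfl (fun l _ => hswap l), Finset.sum_comm]
  apply Finset.sum_congr rfl
  intro i hi
  rw [← Finset.card_filter]
  have : (Finset.range (A ⟨0, hs⟩)).filter (fun l => l < A i) = Finset.range (A i) := by
    ext z
    simp only [Finset.mem_filter, Finset.mem_range]
    have hAle : A i ≤ A ⟨0, hs⟩ := hA (by rw [Fin.le_def]; simp)
    omega
  rw [this, Finset.card_range]

lemma colSum_eq_sum_of_le {C : Multiset ℕ} {j : ℕ} (h : ∀ x ∈ C, x ≤ j) :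
    colSum C j = C.sum := by
  induction C using Multiset.induction_on with
  | empty => simp [colSum]
  | cons x C ih =>
    have hx : x ≤ j := h x (Multiset.mem_cons_self x C)
    have ih' := ih (fun y hy => h y (Multiset.mem_cons_of_mem hy))
    simp only [colSum, Multiset.map_cons, Multiset.sum_cons] at *
    omega

lemma colsOf_sum {s : ℕ} {A : Fin s → ℕ} (hs : 0 < s) (hA : Antitone A) :
    (colsOf A hs).sum = ∑ i, A i := by
  have h1 : colSum (colsOf A hs) s = ∑ i ∈ pref s s, A i := colSum_colsOf hs hA s
  have h2 : ∀ x ∈ colsOf A hs, x ≤ s := by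
    intro x hx
    rw [colsOf, Multiset.mem_map] at hx
    obtain ⟨l, _, rfl⟩ := hx
    calc (Finset.univ.filter (fun i : Fin s => l < A i)).card ≤ Finset.univ.card :=
      Finset.card_le_card (Finset.filter_subset _ _)
    _ = s := by simp
  have h3 : pref s s = Finset.univ := by
    ext i
    simp [mem_pref, i.isLt]
  rw [← colSum_eq_sum_of_le h2, h1, h3]
-- monotonization by exchange
lemma monotonize {s : ℕ} (d t A B : Fin s → ℕ) (hd : Antitone d) (ht : Antitone t) :
    ∀ (N : ℕ) (f : Fin s → ℕ), (∑ i : Fin s, (i : ℕ) * f i) ≤ N →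
    (∀ i, t i ≤ f i ∧ f i ≤ d i) →
    (∀ S : Finset (Fin s), (∑ i ∈ S, (f i - t i)) ≤ ∑ i ∈ pref s S.card, A i) →
    (∀ S : Finset (Fin s), (∑ i ∈ S, (d i - f i)) ≤ ∑ i ∈ pref s S.card, B i) →
    ∃ g : Fin s → ℕ, Antitone g ∧ (∀ i, t i ≤ g i ∧ g i ≤ d i) ∧
      (∀ S : Finset (Fin s), (∑ i ∈ S, (g i - t i)) ≤ ∑ i ∈ pref s S.card, A i) ∧
      (∀ S : Finset (Fin s), (∑ i ∈ S, (d i - g i)) ≤ ∑ i ∈ pref s S.card, B i) ∧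
      (∑ i, (g i - t i)) = (∑ i, (f i - t i)) ∧
      (∑ i, (d i - g i)) = (∑ i, (d i - f i)) := by
  intro N
  induction N using Nat.strong_induction_on with
  | _ N ihN =>
    intro f hW hbd hAs hBs
    by_cases hant : Antitone f
    · exact ⟨f, hant, hbd, hAs, hBs, rfl, rfl⟩
    obtain ⟨i0, h1, hvio⟩ := exists_adjacent_of_not_antitone hant
    set x : Fin s := ⟨i0, Nat.lt_of_succ_lt h1⟩ with hxdef
    set y : Fin s := ⟨i0 + 1, h1⟩ with hydef
    have hxy : x ≠ y := by
      intro h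
      have := congrArg Fin.val h
      simp [hxdef, hydef] at this
    have hxley : x ≤ y := by rw [Fin.le_def]; simp [hxdef, hydef]
    set f' : Fin s → ℕ :=
      Function.update (Function.update f x (f x + 1)) y (f y - 1) with hf'def
    have hf'x : f' x = f x + 1 := by
      rw [hf'def, Function.update_of_ne hxy, Function.update_self]
    have hf'y : f' y = f y - 1 := by
      rw [hf'def, Function.update_self]
    have hf'z : ∀ z, z ≠ x → z ≠ y → f' z = f z := by
      intro z hzx hzy
      rw [hf'def, Function.update_of_ne hzy, Function.update_of_ne hzx]
    have hdxy : d y ≤ d x := hd hxley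
    have htxy : t y ≤ t x := ht hxley
    have htfx := (hbd x).1
    have htfy := (hbd y).1
    have hfdx := (hbd x).2
    have hfdy := (hbd y).2
    -- bounds for f'
    have hbd' : ∀ i, t i ≤ f' i ∧ f' i ≤ d i := by
      intro z
      by_cases hzx : z = x
      · subst hzx
        rw [hf'x]
        constructor
        · omega
        · omega
      by_cases hzy : z = y
      · subst hzy
        rw [hf'y]
        constructor
        · omega
        · omega
      · rw [hf'z z hzx hzy]
        exact hbd z
    -- A-side subset bounds for f'
    have hAs' : ∀ S : Finset (Fin s), (∑ i ∈ S, (f' i - t i)) ≤ ∑ i ∈ pref s S.card, A i := by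
      intro S
      obtain ⟨S', hcard, hle⟩ := exists_same_card_sum_le
        (fun z => f' z - t z) (fun z => f z - t z) x y hxy
        (fun z hzx hzy => by simp only [hf'z z hzx hzy])
        (by simp only [hf'x, hf'y]; omega)
        (by simp only [hf'x, hf'y]; omega)
        (by simp only [hf'x, hf'y]; omega) S
      calc (∑ i ∈ S, (f' i - t i)) ≤ ∑ i ∈ S', (f i - t i) := hle
      _ ≤ ∑ i ∈ pref s S'.card, A i := hAs S'
      _ = ∑ i ∈ pref s S.card, A i := by rw [hcard]
    -- B-side subset bounds for f'
    have hBs' : ∀ S : Finset (Fin s), (∑ i ∈ S, (d i - f' i)) ≤ ∑ i ∈ pref s S.card, B i := by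
      intro S
      obtain ⟨S', hcard, hle⟩ := exists_same_card_sum_le
        (fun z => d z - f' z) (fun z => d z - f z) y x (Ne.symm hxy)
        (fun z hzy hzx => by simp only [hf'z z hzx hzy])
        (by simp only [hf'x, hf'y]; omega)
        (by simp only [hf'x, hf'y]; omega)
        (by simp only [hf'x, hf'y]; omega) S
      calc (∑ i ∈ S, (d i - f' i)) ≤ ∑ i ∈ S', (d i - f i) := hle
      _ ≤ ∑ i ∈ pref s S'.card, B i := hBs S'
      _ = ∑ i ∈ pref s S.card, B i := by rw [hcard]
    -- decomposition of sums over univ at x and y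
    have hymem : y ∈ (Finset.univ : Finset (Fin s)).erase x :=
      Finset.mem_erase.mpr ⟨Ne.symm hxy, Finset.mem_univ y⟩
    have hdecomp : ∀ g : Fin s → ℕ, (∑ i, g i) =
        g x + (g y + ∑ i ∈ ((Finset.univ : Finset (Fin s)).erase x).erase y, g i) := by
      intro g
      rw [Finset.add_sum_erase _ _ hymem, Finset.add_sum_erase _ _ (Finset.mem_univ x)]
    have hrest : ∀ (g g' : Fin s → ℕ), (∀ z, z ≠ x → z ≠ y → g z = g' z) →
        (∑ i ∈ ((Finset.univ : Finset (Fin s)).erase x).erase y, g i) =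
        ∑ i ∈ ((Finset.univ : Finset (Fin s)).erase x).erase y, g' i := by
      intro g g' hoff
      apply Finset.sum_congr rfl
      intro z hz
      have hz1 := Finset.mem_erase.mp hz
      have hz2 := Finset.mem_erase.mp hz1.2
      exact hoff z hz2.1 hz1.1
    -- the measure decreases
    have hWdec : (∑ i : Fin s, (i : ℕ) * f' i) + 1 = ∑ i : Fin s, (i : ℕ) * f i := by
      have e1 := hdecomp (fun i => (i : ℕ) * f' i)
      have e2 := hdecomp (fun i => (i : ℕ) * f i)
      have e3 := hrest (fun i => (i : ℕ) * f' i) (fun i => (i : ℕ) * f i)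
        (fun z hzx hzy => by simp only [hf'z z hzx hzy])
      rw [e1, e2, e3, hf'x, hf'y]
      have hfy1 : 1 ≤ f y := by omega
      have m1 : i0 * (f x + 1) = i0 * f x + i0 := by ring
      have m2 : (i0 + 1) * (f y - 1) + (i0 + 1) = (i0 + 1) * f y := by
        calc (i0 + 1) * (f y - 1) + (i0 + 1) = (i0 + 1) * ((f y - 1) + 1) := by ring
        _ = (i0 + 1) * f y := by rw [Nat.sub_add_cancel hfy1]
      have hxv : (x : ℕ) = i0 := rfl
      have hyv : (y : ℕ) = i0 + 1 := rfl
      rw [hxv, hyv]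
      omega
    -- totals preserved
    have htotA : (∑ i, (f' i - t i)) = ∑ i, (f i - t i) := by
      have e1 := hdecomp (fun i => f' i - t i)
      have e2 := hdecomp (fun i => f i - t i)
      have e3 := hrest (fun i => f' i - t i) (fun i => f i - t i)
        (fun z hzx hzy => by simp only [hf'z z hzx hzy])
      rw [e1, e2, e3, hf'x, hf'y]
      omega
    have htotB : (∑ i, (d i - f' i)) = ∑ i, (d i - f i) := by
      have e1 := hdecomp (fun i => d i - f' i)
      have e2 := hdecomp (fun i => d i - f i)
      have e3 := hrest (fun i => d i - f' i) (fun i => d i - f i)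
        (fun z hzx hzy => by simp only [hf'z z hzx hzy])
      rw [e1, e2, e3, hf'x, hf'y]
      omega
    have hWlt : (∑ i : Fin s, (i : ℕ) * f' i) < N := by omega
    obtain ⟨g, hg1, hg2, hg3, hg4, hg5, hg6⟩ :=
      ihN (∑ i : Fin s, (i : ℕ) * f' i) hWlt f' le_rfl hbd' hAs' hBs'
    exact ⟨g, hg1, hg2, hg3, hg4, by rw [hg5, htotA], by rw [hg6, htotB]⟩

theorem stmt1 (s : ℕ) (hs : 0 < s)
    (d t A B : Fin s → ℕ)
    (hd : Antitone d) (ht : Antitone t) (hA : Antitone A) (hB : Antitone B)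
    (hdt : ∀ i, t i ≤ d i)
    (hmaj : Majorized (tupleMul (fun i => d i - t i)) (tupleMul (fun i => A i + B i))) :
    ∃ f : Fin s → ℕ,
      Antitone f ∧
      (∀ i, t i ≤ f i ∧ f i ≤ d i) ∧
      Majorized (tupleMul (fun i => f i - t i)) (tupleMul A) ∧
      Majorized (tupleMul (fun i => d i - f i)) (tupleMul B) := by
  set c : Fin s → ℕ := fun i => d i - t i with hc
  have hsum0 : (∑ i, c i) = ∑ i, (A i + B i) := by
    have h := hmaj.1
    rw [tupleMul_sum, tupleMul_sum] at h
    exact h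
  have hABanti : Antitone (fun i => A i + B i) := fun i j hij => Nat.add_le_add (hA hij) (hB hij)
  have hSbound : ∀ S : Finset (Fin s), (∑ i ∈ S, c i) ≤ ∑ i ∈ pref s S.card, (A i + B i) := by
    intro S
    calc (∑ i ∈ S, c i) ≤ kMaxSum (tupleMul c) S.card := finset_sum_le_kMaxSum c S le_rfl
    _ ≤ kMaxSum (tupleMul (fun i => A i + B i)) S.card := hmaj.2 S.card
    _ = ∑ i ∈ pref s S.card, (A i + B i) := kMaxSum_antitone hABanti S.card
  -- sorting permutation
  set σ : Equiv.Perm (Fin s) := (Fin.revPerm).trans (Tuple.sort c) with hσ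
  set cs : Fin s → ℕ := fun i => c (σ i) with hcs
  have hcs_anti : Antitone cs := by
    intro i j hij
    show c (σ j) ≤ c (σ i)
    have h1 : Fin.rev j ≤ Fin.rev i := Fin.rev_le_rev.mpr hij
    exact Tuple.monotone_sort c h1
  have hcolA : ∀ j, colSum (colsOf A hs) j = ∑ i ∈ pref s j, A i := colSum_colsOf hs hA
  have hcolB : ∀ j, colSum (colsOf B hs) j = ∑ i ∈ pref s j, B i := colSum_colsOf hs hB
  have hdomGR : ∀ j, j ≤ s →
      (∑ i ∈ pref s j, cs i) ≤ colSum (colsOf A hs + colsOf B hs) j := by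
    intro j hj
    have h1 : (∑ i ∈ (pref s j).image σ, c i) = ∑ i ∈ pref s j, cs i := by
      rw [Finset.sum_image (fun x _ y _ h => σ.injective h)]
    have hcard : ((pref s j).image σ).card = min j s := by
      rw [Finset.card_image_of_injective _ σ.injective, card_pref]
    have h2 := hSbound ((pref s j).image σ)
    rw [hcard, h1] at h2
    rw [colSum_add, hcolA j, hcolB j, ← Finset.sum_add_distrib]
    calc (∑ i ∈ pref s j, cs i) ≤ ∑ i ∈ pref s (min j s), (A i + B i) := h2
    _ = ∑ i ∈ pref s j, (A i + B i) := by rw [← pref_eq_min]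
  have htotGR : (∑ i, cs i) = (colsOf A hs + colsOf B hs).sum := by
    have h1 : (∑ i, cs i) = ∑ i, c i := Equiv.sum_comp σ c
    rw [h1, hsum0, Multiset.sum_add, colsOf_sum hs hA, colsOf_sum hs hB,
      Finset.sum_add_distrib]
  obtain ⟨a', b', hab', hsa', hsb', hSa', hSb'⟩ :=
    GR s cs hcs_anti (colsOf A hs) (colsOf B hs) hdomGR htotGR
  set a : Fin s → ℕ := fun i => a' (σ.symm i) with ha
  set b : Fin s → ℕ := fun i => b' (σ.symm i) with hb
  have hab : ∀ i, a i + b i = c i := by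
    intro i
    have h1 := hab' (σ.symm i)
    have h2 : cs (σ.symm i) = c i := by
      show c (σ (σ.symm i)) = c i
      rw [Equiv.apply_symm_apply]
    rw [← h2]
    exact h1
  have hSa : ∀ S : Finset (Fin s), (∑ i ∈ S, a i) ≤ ∑ i ∈ pref s S.card, A i := by
    intro S
    have h1 : (∑ i ∈ S.image σ.symm, a' i) = ∑ i ∈ S, a i := by
      rw [Finset.sum_image (fun x _ y _ h => σ.symm.injective h)]
    have h2 := hSa' (S.image σ.symm)
    rw [Finset.card_image_of_injective _ σ.symm.injective, h1, hcolA] at h2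
    exact h2
  have hSb : ∀ S : Finset (Fin s), (∑ i ∈ S, b i) ≤ ∑ i ∈ pref s S.card, B i := by
    intro S
    have h1 : (∑ i ∈ S.image σ.symm, b' i) = ∑ i ∈ S, b i := by
      rw [Finset.sum_image (fun x _ y _ h => σ.symm.injective h)]
    have h2 := hSb' (S.image σ.symm)
    rw [Finset.card_image_of_injective _ σ.symm.injective, h1, hcolB] at h2
    exact h2
  have hsa : (∑ i, a i) = ∑ i, A i := by
    have h1 : (∑ i, a i) = ∑ i, a' i := Equiv.sum_comp σ.symm a'
    rw [h1, hsa', colsOf_sum hs hA]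
  have hsb : (∑ i, b i) = ∑ i, B i := by
    have h1 : (∑ i, b i) = ∑ i, b' i := Equiv.sum_comp σ.symm b'
    rw [h1, hsb', colsOf_sum hs hB]
  -- the initial (not necessarily antitone) interpolant
  set f₀ : Fin s → ℕ := fun i => t i + a i with hf₀
  have hcle : ∀ i, a i ≤ c i := by
    intro i
    have := hab i
    omega
  have hcval : ∀ i, c i = d i - t i := fun i => rfl
  have hbd0 : ∀ i, t i ≤ f₀ i ∧ f₀ i ≤ d i := by
    intro i
    have h1 := hcle i
    have h2 := hcval i
    have h3 := hdt i
    constructor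
    · show t i ≤ t i + a i
      omega
    · show t i + a i ≤ d i
      omega
  have hft : ∀ i, f₀ i - t i = a i := by
    intro i
    show t i + a i - t i = a i
    omega
  have hdf : ∀ i, d i - f₀ i = b i := by
    intro i
    have h1 := hab i
    have h2 := hcval i
    have h3 := hdt i
    show d i - (t i + a i) = b i
    omega
  have hA0 : ∀ S : Finset (Fin s), (∑ i ∈ S, (f₀ i - t i)) ≤ ∑ i ∈ pref s S.card, A i := by
    intro S
    rw [Finset.sum_congr rfl (fun i _ => hft i)]
    exact hSa S
  have hB0 : ∀ S : Finset (Fin s), (∑ i ∈ S, (d i - f₀ i)) ≤ ∑ i ∈ pref s S.card, B i := by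
    intro S
    rw [Finset.sum_congr rfl (fun i _ => hdf i)]
    exact hSb S
  obtain ⟨g, hg1, hg2, hg3, hg4, hg5, hg6⟩ :=
    monotonize d t A B hd ht (∑ i : Fin s, (i : ℕ) * f₀ i) f₀ le_rfl hbd0 hA0 hB0
  have hgtA : (∑ i, (g i - t i)) = ∑ i, A i := by
    rw [hg5, Finset.sum_congr rfl (fun i _ => hft i), hsa]
  have hgtB : (∑ i, (d i - g i)) = ∑ i, B i := by
    rw [hg6, Finset.sum_congr rfl (fun i _ => hdf i), hsb]
  refine ⟨g, hg1, hg2, ⟨?_, ?_⟩, ⟨?_, ?_⟩⟩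
  · rw [tupleMul_sum, tupleMul_sum]
    exact hgtA
  · intro j
    rw [kMaxSum_antitone hA j]
    apply kMaxSum_tuple_le
    intro S hS
    calc (∑ i ∈ S, (g i - t i)) ≤ ∑ i ∈ pref s S.card, A i := hg3 S
    _ ≤ ∑ i ∈ pref s j, A i := Finset.sum_le_sum_of_subset (pref_mono hS)
  · rw [tupleMul_sum, tupleMul_sum]
    exact hgtB
  · intro j
    rw [kMaxSum_antitone hB j]
    apply kMaxSum_tuple_le
    intro S hS
    calc (∑ i ∈ S, (d i - g i)) ≤ ∑ i ∈ pref s S.card, B i := hg4 S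
    _ ≤ ∑ i ∈ pref s j, B i := Finset.sum_le_sum_of_subset (pref_mono hS)
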